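/- If H is an n-vertex d-regular k-uniform hypergraph (k ≥ 2, d ≥ 1), then the average size of a matching in H (expectation of |M| for M uniform over all matchings) is at most (1 − 1/(d+1)) · n/k. -/

import Mathlib

set_option maxHeartbeats 1000000


open Finset
open scoped Classical

variable {V : Type*}

/-- Degree of a vertex: number of edges containing it. -/
noncomputable def degree (E : Finset (Finset V)) (v : V) : ℕ :=
  (E.filter (fun e => v ∈ e)).card

/-- `E` is `k`-uniform. -/
def Uniform (E : Finset (Finset V)) (k : ℕ) : Prop := ∀ e ∈ E, e.card = k

/-- `E` is linear: two distinct edges share at most one vertex. -/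
noncomputable def Linear (E : Finset (Finset V)) : Prop :=
  ∀ e ∈ E, ∀ f ∈ E, e ≠ f → (e ∩ f).card ≤ 1

/-- The set of matchings of `E`: subsets of pairwise disjoint edges. -/
noncomputable def matchings (E : Finset (Finset V)) : Finset (Finset (Finset V)) :=
  E.powerset.filter (fun M => ∀ e ∈ M, ∀ f ∈ M, e ≠ f → Disjoint e f)

/-- Probability that a uniformly random matching of `E` leaves `v` uncovered. -/
noncomputable def uncovProb (E : Finset (Finset V)) (v : V) : ℝ :=
  (((matchings E).filter (fun M => ∀ e ∈ M, v ∉ e)).card : ℝ) / ((matchings E).card : ℝ)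

lemma mem_matchings {E M : Finset (Finset V)} :
    M ∈ matchings E ↔ M ⊆ E ∧ ∀ e ∈ M, ∀ f ∈ M, e ≠ f → Disjoint e f := by
  simp [matchings]

lemma empty_mem_matchings (E : Finset (Finset V)) : ∅ ∈ matchings E := by
  simp [matchings]

/-- matchings avoiding v -/
noncomputable def uncovM (E : Finset (Finset V)) (v : V) : Finset (Finset (Finset V)) :=
  (matchings E).filter (fun M => ∀ e ∈ M, v ∉ e)

/-- matchings covering v -/
noncomputable def covM (E : Finset (Finset V)) (v : V) : Finset (Finset (Finset V)) :=
  (matchings E).filter (fun M => ¬ ∀ e ∈ M, v ∉ e)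

lemma split_card (E : Finset (Finset V)) (v : V) :
    (uncovM E v).card + (covM E v).card = (matchings E).card := by
  rw [uncovM, covM]
  rw [Finset.card_filter_add_card_filter_not]

lemma uncov_lb (E : Finset (Finset V)) (v : V) (d : ℕ) (hdeg : degree E v = d) :
    (matchings E).card ≤ (d + 1) * (uncovM E v).card := by
  have hCb : (covM E v).card ≤ d * (uncovM E v).card := by
    have h1 : (covM E v).card
        ≤ d * ((covM E v).image (fun M => M.filter (fun e => v ∉ e))).card := by
      apply Finset.card_le_mul_card_image
      intro N hN
      have hsub : ((covM E v).filter (fun M => M.filter (fun e => v ∉ e) = N)) ⊆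
          (E.filter (fun e => v ∈ e)).image (fun e => insert e N) := by
        intro M hM
        obtain ⟨hMC, hfM⟩ := Finset.mem_filter.mp hM
        rw [covM, Finset.mem_filter] at hMC
        obtain ⟨hMT, hMv⟩ := hMC
        rw [mem_matchings] at hMT
        push_neg at hMv
        obtain ⟨e, heM, hve⟩ := hMv
        refine Finset.mem_image.mpr ⟨e, Finset.mem_filter.mpr ⟨hMT.1 heM, hve⟩, ?_⟩
        rw [← hfM]
        ext x
        simp only [Finset.mem_insert, Finset.mem_filter]
        constructor
        · rintro (rfl | ⟨hx, _⟩) <;> [exact heM; exact hx]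
        · intro hx
          by_cases hvx : v ∈ x
          · left
            by_contra hne
            exact Finset.disjoint_left.mp (hMT.2 e heM x hx (Ne.symm hne)) hve hvx
          · right; exact ⟨hx, hvx⟩
      calc ((covM E v).filter (fun M => M.filter (fun e => v ∉ e) = N)).card
          ≤ ((E.filter (fun e => v ∈ e)).image (fun e => insert e N)).card :=
            Finset.card_le_card hsub
        _ ≤ (E.filter (fun e => v ∈ e)).card := Finset.card_image_le
        _ = d := hdeg
    have h2 : ((covM E v).image (fun M => M.filter (fun e => v ∉ e))).card
        ≤ (uncovM E v).card := by
      apply Finset.card_le_card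
      intro N hN
      obtain ⟨M, hM, rfl⟩ := Finset.mem_image.mp hN
      rw [covM, Finset.mem_filter] at hM
      obtain ⟨hMT, _⟩ := hM
      rw [mem_matchings] at hMT
      rw [uncovM, Finset.mem_filter]
      refine ⟨mem_matchings.mpr ⟨?_, ?_⟩, ?_⟩
      · exact (Finset.filter_subset _ _).trans hMT.1
      · intro e he f hf hne
        exact hMT.2 e (Finset.filter_subset _ _ he) f (Finset.filter_subset _ _ hf) hne
      · intro e he
        exact (Finset.mem_filter.mp he).2
    exact h1.trans (Nat.mul_le_mul_left d h2)
  have hsplit := split_card E v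
  have : (d + 1) * (uncovM E v).card = d * (uncovM E v).card + (uncovM E v).card := by ring
  omega

lemma count_edges (V : Type) [Fintype V] (k : ℕ) (E : Finset (Finset V)) (hU : Uniform E k) :
    k * ∑ M ∈ matchings E, M.card = ∑ v : V, (covM E v).card := by
  rw [Finset.mul_sum]
  have hstep : ∀ M ∈ matchings E, k * M.card
      = ∑ v : V, (if ¬ ∀ e ∈ M, v ∉ e then 1 else 0) := by
    intro M hM
    rw [mem_matchings] at hM
    have hbu : (M.biUnion id).card = ∑ e ∈ M, e.card :=
      Finset.card_biUnion (by intro x hx y hy hxy; exact hM.2 x hx y hy hxy)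
    have hcards : ∑ e ∈ M, e.card = M.card * k := by
      rw [Finset.sum_congr rfl (fun e he => hU e (hM.1 he)), Finset.sum_const, smul_eq_mul]
    have hfl : (Finset.univ.filter (fun v : V => ¬ ∀ e ∈ M, v ∉ e)) = M.biUnion id := by
      ext x; simp
    calc k * M.card = M.card * k := Nat.mul_comm _ _
      _ = (M.biUnion id).card := by rw [hbu, hcards]
      _ = (Finset.univ.filter (fun v : V => ¬ ∀ e ∈ M, v ∉ e)).card := by rw [hfl]
      _ = ∑ v : V, (if ¬ ∀ e ∈ M, v ∉ e then 1 else 0) := Finset.card_filter _ _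
  rw [Finset.sum_congr rfl hstep, Finset.sum_comm]
  refine Finset.sum_congr rfl (fun v _ => ?_)
  rw [covM, Finset.card_filter]
  refine Finset.sum_congr rfl fun M _ => ?_
  congr

/-- The average size of a matching in an `n`-vertex `d`-regular `k`-uniform hypergraph
is at most `(1 - 1/(d+1)) · n/k`. -/
theorem average_matching_size (V : Type) [Fintype V] (k d : ℕ) (hk : 2 ≤ k) (hd : 1 ≤ d)
    (E : Finset (Finset V)) (hU : Uniform E k) (hreg : ∀ w : V, degree E w = d) :
    (∑ M ∈ matchings E, (M.card : ℝ)) / ((matchings E).card : ℝ)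
      ≤ (1 - 1 / ((d : ℝ) + 1)) * (Fintype.card V) / k := by
  have hT0 : 0 < (matchings E).card := Finset.card_pos.mpr ⟨∅, empty_mem_matchings E⟩
  have hTR : (0:ℝ) < (matchings E).card := by exact_mod_cast hT0
  have hkR : (0:ℝ) < (k:ℝ) := by
    have : 0 < k := lt_of_lt_of_le two_pos hk
    exact_mod_cast this
  have hdpos : (0:ℝ) < (d:ℝ) + 1 := by positivity
  have hcount := count_edges V k E hU
  -- per-vertex bound in ℝ
  have hvb : ∀ v : V, ((covM E v).card : ℝ)
      ≤ (1 - 1 / ((d : ℝ) + 1)) * (matchings E).card := by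
    intro v
    have hs := split_card E v
    have hlb := uncov_lb E v d (hreg v)
    have hlbR : ((matchings E).card : ℝ) ≤ ((d:ℝ) + 1) * (uncovM E v).card := by
      exact_mod_cast hlb
    have hsR : ((uncovM E v).card : ℝ) + (covM E v).card = (matchings E).card := by
      exact_mod_cast hs
    have h1 : (1:ℝ) - 1 / ((d:ℝ)+1) = (d:ℝ)/((d:ℝ)+1) := by field_simp; ring
    rw [h1, div_mul_eq_mul_div, le_div_iff₀ hdpos]
    nlinarith [hlbR, hsR]
  -- combine
  have hsum : (k:ℝ) * ∑ M ∈ matchings E, (M.card : ℝ)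
      ≤ (1 - 1 / ((d:ℝ)+1)) * (Fintype.card V) * (matchings E).card := by
    have hcR : (k:ℝ) * ∑ M ∈ matchings E, (M.card : ℝ)
        = ∑ v : V, ((covM E v).card : ℝ) := by exact_mod_cast hcount
    rw [hcR]
    calc ∑ v : V, ((covM E v).card : ℝ)
        ≤ ∑ _v : V, (1 - 1 / ((d:ℝ)+1)) * (matchings E).card :=
          Finset.sum_le_sum (fun v _ => hvb v)
      _ = (1 - 1 / ((d:ℝ)+1)) * (Fintype.card V) * (matchings E).card := by
          rw [Finset.sum_const, Finset.card_univ, nsmul_eq_mul]; ring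
  rw [div_le_div_iff₀ hTR hkR]
  nlinarith [hsum]
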